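/- Let g(x,y) = (y / Γ(1+y)^{1/y}) · (Γ(1+xy)^{1/y} / (y^x · Γ(1+x))) for x ≥ 1/2 and y ≥ 2. Then for every fixed x ≥ 1, the function y ↦ g(x,y) is non-increasing on [2, ∞); that is, for all x ≥ 1 and 2 ≤ y₁ ≤ y₂, g(x,y₂) ≤ g(x,y₁). -/

import Mathlib

open Real Filter Finset Topology

/-- `g(x,y) = (y / Γ(1+y)^(1/y)) · (Γ(1+xy)^(1/y) / (yˣ · Γ(1+x)))`. -/
noncomputable def g (x y : ℝ) : ℝ :=
  (y / Real.Gamma (1 + y) ^ (1 / y)) *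
    (Real.Gamma (1 + x * y) ^ (1 / y) / (y ^ x * Real.Gamma (1 + x)))

noncomputable def Gfun (s : ℝ) : ℝ := Real.log (Real.Gamma (1 + s)) - s * Real.log s + s

noncomputable def Gn (n : ℕ) (s : ℝ) : ℝ :=
  (1 + s) * Real.log n + Real.log ((Nat.factorial n : ℕ) : ℝ) -
    (∑ j ∈ Finset.range (n + 1), Real.log (1 + s + j)) - s * Real.log s + s

noncomputable def Gn' (n : ℕ) (s : ℝ) : ℝ :=
  Real.log n - (∑ j ∈ Finset.range (n + 1), (1 + s + j)⁻¹) - Real.log s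

noncomputable def Gn'' (n : ℕ) (s : ℝ) : ℝ :=
  (∑ j ∈ Finset.range (n + 1), ((1 + s + j) ^ 2)⁻¹) - s⁻¹

lemma aff_pos {s : ℝ} (hs : 0 < s) (j : ℕ) : 0 < 1 + s + (j : ℝ) := by positivity

lemma haff (s : ℝ) (j : ℕ) : HasDerivAt (fun s : ℝ => 1 + s + (j : ℝ)) 1 s := by
  simpa using ((hasDerivAt_id s).const_add 1).add_const (j : ℝ)

lemma hasDerivAt_Gn (n : ℕ) {s : ℝ} (hs : 0 < s) : HasDerivAt (Gn n) (Gn' n s) s := by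
  have hsum : HasDerivAt (fun s : ℝ => ∑ j ∈ Finset.range (n + 1), Real.log (1 + s + j))
      (∑ j ∈ Finset.range (n + 1), (1 + s + j)⁻¹) s := by
    refine HasDerivAt.fun_sum fun j _ => ?_
    exact ((Real.hasDerivAt_log (aff_pos hs j).ne').comp s (haff s j)).congr_deriv (mul_one _)
  have hslog : HasDerivAt (fun s : ℝ => s * Real.log s) (Real.log s + 1) s := by
    have := (hasDerivAt_id s).mul (Real.hasDerivAt_log hs.ne')
    exact this.congr_deriv (by simp [hs.ne'])
  have h1 : HasDerivAt (fun s : ℝ => (1 + s) * Real.log n) (Real.log n) s := by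
    simpa using ((hasDerivAt_id s).const_add 1).mul_const (Real.log n)
  have h := ((((h1.add_const (Real.log ((Nat.factorial n : ℕ) : ℝ))).sub hsum).sub hslog).add (hasDerivAt_id s))
  exact h.congr_deriv (by unfold Gn'; ring)

lemma hasDerivAt_Gn' (n : ℕ) {s : ℝ} (hs : 0 < s) : HasDerivAt (Gn' n) (Gn'' n s) s := by
  have hsum : HasDerivAt (fun s : ℝ => ∑ j ∈ Finset.range (n + 1), (1 + s + j)⁻¹)
      (∑ j ∈ Finset.range (n + 1), -((1 + s + j) ^ 2)⁻¹) s := by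
    refine HasDerivAt.fun_sum fun j _ => ?_
    have := (haff s j).inv (aff_pos hs j).ne'
    exact this.congr_deriv (by ring)
  have h : HasDerivAt (Gn' n) (0 - (∑ j ∈ Finset.range (n + 1), -((1 + s + j) ^ 2)⁻¹) - s⁻¹) s :=
    ((hasDerivAt_const s (Real.log n)).sub hsum).sub (Real.hasDerivAt_log hs.ne')
  convert h using 1
  unfold Gn''
  rw [Finset.sum_neg_distrib]
  ring

lemma Gn''_nonpos (n : ℕ) {s : ℝ} (hs : 0 < s) : Gn'' n s ≤ 0 := by
  unfold Gn''
  have key : (∑ j ∈ Finset.range (n + 1), ((1 + s + j) ^ 2)⁻¹) ≤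
      ∑ j ∈ Finset.range (n + 1), ((s + j)⁻¹ - (s + (j + 1 : ℕ))⁻¹) := by
    refine Finset.sum_le_sum fun j _ => ?_
    have h1 : (0:ℝ) < s + j := by positivity
    have h3 : (0:ℝ) < 1 + s + j := by positivity
    have hle : ((1 + s + (j:ℝ)) ^ 2)⁻¹ ≤ ((s + j) * (1 + s + j))⁻¹ := by
      apply inv_anti₀ (by positivity)
      nlinarith
    have h2 : (0:ℝ) < s + ((j:ℝ) + 1) := by positivity
    have heq : (s + (j:ℝ))⁻¹ - (s + ((j + 1 : ℕ) : ℝ))⁻¹ = ((s + j) * (1 + s + j))⁻¹ := by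
      push_cast
      field_simp
      ring
    linarith
  have tel : (∑ j ∈ Finset.range (n + 1), ((s + j)⁻¹ - (s + (j + 1 : ℕ))⁻¹))
      = s⁻¹ - (s + (n + 1 : ℕ))⁻¹ := by
    have := Finset.sum_range_sub' (fun k : ℕ => (s + k)⁻¹) (n + 1)
    simpa using this
  have hpos : (0:ℝ) ≤ (s + ((n + 1 : ℕ) : ℝ))⁻¹ := by positivity
  rw [tel] at key
  linarith

lemma Gn_concave (n : ℕ) : ConcaveOn ℝ (Set.Ioi 0) (Gn n) := by
  have hint : interior (Set.Ioi (0:ℝ)) = Set.Ioi 0 := interior_Ioi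
  refine concaveOn_of_hasDerivWithinAt2_nonpos (f' := Gn' n) (f'' := Gn'' n) (convex_Ioi 0) ?_ ?_ ?_ ?_
  · intro x hx
    exact (hasDerivAt_Gn n hx).continuousAt.continuousWithinAt
  · intro x hx
    rw [hint] at hx ⊢
    exact (hasDerivAt_Gn n hx).hasDerivWithinAt
  · intro x hx
    rw [hint] at hx ⊢
    exact (hasDerivAt_Gn' n hx).hasDerivWithinAt
  · intro x hx
    rw [hint] at hx
    exact Gn''_nonpos n hx

lemma Gn_tendsto {s : ℝ} (hs : 0 < s) : Tendsto (fun n => Gn n s) atTop (𝓝 (Gfun s)) := by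
  have hG : 0 < Real.Gamma (1 + s) := Real.Gamma_pos_of_pos (by linarith)
  have h0 : Tendsto (fun n => Real.log (Real.GammaSeq (1 + s) n)) atTop
      (𝓝 (Real.log (Real.Gamma (1 + s)))) :=
    (Real.GammaSeq_tendsto_Gamma (1 + s)).log hG.ne'
  have h1 : Tendsto (fun n => Real.log (Real.GammaSeq (1 + s) n) - s * Real.log s + s) atTop
      (𝓝 (Gfun s)) := by
    unfold Gfun
    exact (h0.sub_const _).add_const _
  refine h1.congr' ?_
  filter_upwards [eventually_ge_atTop 1] with n hn
  have hnpos : (0:ℝ) < n := by exact_mod_cast hn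
  have hprod : ∀ j ∈ Finset.range (n + 1), (1 + s + (j:ℝ)) ≠ 0 := fun j _ => (aff_pos hs j).ne'
  have hfac : (0:ℝ) < ((Nat.factorial n : ℕ) : ℝ) := by exact_mod_cast n.factorial_pos
  unfold Real.GammaSeq
  rw [Real.log_div (by positivity) (Finset.prod_ne_zero_iff.mpr hprod),
    Real.log_mul (by positivity) hfac.ne', Real.log_rpow hnpos,
    Real.log_prod hprod]
  unfold Gn
  ring

lemma G_concave : ConcaveOn ℝ (Set.Ioi 0) Gfun := by
  refine ⟨convex_Ioi 0, fun a ha b hb wa wb hwa hwb hab => ?_⟩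
  have hmem : wa • a + wb • b ∈ Set.Ioi (0:ℝ) := (convex_Ioi 0) ha hb hwa hwb hab
  refine le_of_tendsto_of_tendsto'
    (f := fun n => wa • Gn n a + wb • Gn n b) (g := fun n => Gn n (wa • a + wb • b))
    (((Gn_tendsto ha).const_smul wa).add ((Gn_tendsto hb).const_smul wb))
    (Gn_tendsto hmem) (fun n => (Gn_concave n).2 ha hb hwa hwb hab)

/-- slope comparison for concave functions -/
lemma slope_comp {a b c d : ℝ} (ha : a ∈ Set.Ioi (0:ℝ)) (hb : b ∈ Set.Ioi (0:ℝ))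
    (hc : c ∈ Set.Ioi (0:ℝ)) (hd : d ∈ Set.Ioi (0:ℝ))
    (hab : a < b) (hcd : c < d) (hac : a ≤ c) (hbd : b ≤ d) :
    (Gfun d - Gfun c) / (d - c) ≤ (Gfun b - Gfun a) / (b - a) := by
  have hF : ConvexOn ℝ (Set.Ioi 0) (-Gfun) := G_concave.neg
  have had : a < d := lt_of_lt_of_le hab hbd
  have h1 : ((-Gfun) b - (-Gfun) a) / (b - a) ≤ ((-Gfun) d - (-Gfun) a) / (d - a) :=
    hF.secant_mono ha hb hd hab.ne' had.ne' hbd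
  have h2 : ((-Gfun) a - (-Gfun) d) / (a - d) ≤ ((-Gfun) c - (-Gfun) d) / (c - d) :=
    hF.secant_mono hd ha hc had.ne hcd.ne hac
  have e1 : ((-Gfun) a - (-Gfun) d) / (a - d) = ((-Gfun) d - (-Gfun) a) / (d - a) := by
    rw [← neg_div_neg_eq]; ring_nf
  have e2 : ((-Gfun) c - (-Gfun) d) / (c - d) = ((-Gfun) d - (-Gfun) c) / (d - c) := by
    rw [← neg_div_neg_eq]; ring_nf
  rw [e1, e2] at h2
  have h3 : ((-Gfun) b - (-Gfun) a) / (b - a) ≤ ((-Gfun) d - (-Gfun) c) / (d - c) := h1.trans h2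
  simp only [Pi.neg_apply] at h3
  have hba : 0 < b - a := by linarith
  have hdc : 0 < d - c := by linarith
  rw [div_le_div_iff₀ hba hdc] at h3
  rw [div_le_div_iff₀ hdc hba]
  nlinarith

lemma g_eq_exp {x y : ℝ} (hx : 1 ≤ x) (hy : 0 < y) :
    g x y = Real.exp ((Gfun (x * y) - Gfun y) / y +
      (x * Real.log x - x + 1 - Real.log (Real.Gamma (1 + x)))) := by
  have hx0 : 0 < x := by linarith
  have hΓy : 0 < Real.Gamma (1 + y) := Real.Gamma_pos_of_pos (by linarith)
  have hΓx : 0 < Real.Gamma (1 + x) := Real.Gamma_pos_of_pos (by linarith)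
  have hΓxy : 0 < Real.Gamma (1 + x * y) := Real.Gamma_pos_of_pos (by positivity)
  have hgpos : 0 < g x y := by
    unfold g
    positivity
  rw [← Real.exp_log hgpos]
  congr 1
  unfold g
  rw [Real.log_mul (by positivity) (by positivity),
    Real.log_div hy.ne' (by positivity),
    Real.log_div (by positivity) (by positivity),
    Real.log_mul (by positivity) hΓx.ne',
    Real.log_rpow hΓy, Real.log_rpow hΓxy, Real.log_rpow hy]
  unfold Gfun
  rw [Real.log_mul hx0.ne' hy.ne']
  field_simp
  ring

/-- Main slope inequality. -/
lemma slope_ineq {x y₁ y₂ : ℝ} (hx : 1 ≤ x) (h₁ : 2 ≤ y₁) (h₁₂ : y₁ ≤ y₂) :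
    (Gfun (x * y₂) - Gfun y₂) / y₂ ≤ (Gfun (x * y₁) - Gfun y₁) / y₁ := by
  have hy₁ : (0:ℝ) < y₁ := by linarith
  have hy₂ : (0:ℝ) < y₂ := by linarith
  rcases eq_or_lt_of_le hx with rfl | hx1
  · simp
  rcases eq_or_lt_of_le h₁₂ with rfl | h12
  · exact le_refl _
  have H := slope_comp (a := y₁) (b := x * y₁) (c := y₂) (d := x * y₂)
    (Set.mem_Ioi.mpr hy₁) (Set.mem_Ioi.mpr (by positivity)) (Set.mem_Ioi.mpr hy₂)
    (Set.mem_Ioi.mpr (by positivity)) (by nlinarith) (by nlinarith) h₁₂ (by nlinarith)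
  have hd₁ : (0:ℝ) < x * y₁ - y₁ := by nlinarith
  have hd₂ : (0:ℝ) < x * y₂ - y₂ := by nlinarith
  rw [div_le_div_iff₀ hd₂ hd₁] at H
  rw [div_le_div_iff₀ hy₂ hy₁]
  nlinarith

theorem g_antitone_in_y (x y₁ y₂ : ℝ) (hx : 1 ≤ x) (h₁ : 2 ≤ y₁) (h₁₂ : y₁ ≤ y₂) :
    g x y₂ ≤ g x y₁ := by
  rw [g_eq_exp hx (by linarith : (0:ℝ) < y₁), g_eq_exp hx (by linarith : (0:ℝ) < y₂)]
  exact Real.exp_le_exp.mpr (by linarith [slope_ineq hx h₁ h₁₂])
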